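/- The persistence module over the poset with two incomparable minimal elements a, b both below c, with c below d, assigning K to a and b, K² to c, K to d, with maps e ↦ (0,e) from a, e ↦ (e,0) from b, and (x,y) ↦ x+y from c to d, is indecomposable. -/
import Mathlib

section Aux

variable {K : Type*} [Field K]

lemma aux_top_of_one_mem (S : Submodule K K) (h : (1:K) ∈ S) : S = ⊤ := by
  rw [Submodule.eq_top_iff']
  intro x
  simpa using S.smul_mem x h

lemma aux_single_mem (S : Submodule K K) (T : Submodule K (Fin 2 → K)) (i : Fin 2)
    (hS : S = ⊤)
    (h : S.map (LinearMap.single K (fun _ : Fin 2 => K) i) ≤ T) :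
    Pi.single i (1:K) ∈ T := by
  apply h
  exact ⟨1, by simp [hS], by simp [LinearMap.single_apply]⟩

lemma aux_one_mem (T : Submodule K (Fin 2 → K)) (D : Submodule K K) (i : Fin 2)
    (hv : Pi.single i (1:K) ∈ T)
    (h : T.map ((LinearMap.proj 0 : (Fin 2 → K) →ₗ[K] K) + LinearMap.proj 1) ≤ D) :
    (1:K) ∈ D := by
  have := h ⟨Pi.single i 1, hv, rfl⟩
  fin_cases i <;> simpa using this

lemma aux_c_top (T : Submodule K (Fin 2 → K))
    (h0 : Pi.single (0 : Fin 2) (1:K) ∈ T) (h1 : Pi.single (1 : Fin 2) (1:K) ∈ T) :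
    T = ⊤ := by
  rw [Submodule.eq_top_iff']
  intro v
  have hv : v = v 0 • (Pi.single (0:Fin 2) (1:K) : Fin 2 → K) + v 1 • (Pi.single (1:Fin 2) (1:K) : Fin 2 → K) := by
    funext j
    fin_cases j <;> simp
  rw [hv]
  exact T.add_mem (T.smul_mem _ h0) (T.smul_mem _ h1)

lemma aux_bot {α : Type*} [Lattice α] [BoundedOrder α] (p q : α)
    (h : IsCompl p q) (hq : q = ⊤) : p = ⊥ := by
  have := h.inf_eq_bot
  rwa [hq, inf_top_eq] at this

end Aux

theorem stmt_14 (K : Type*) [Field K]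
    (A B : K →ₗ[K] (Fin 2 → K)) (C : (Fin 2 → K) →ₗ[K] K)
    (hA : A = LinearMap.single K (fun _ : Fin 2 => K) 1)
    (hB : B = LinearMap.single K (fun _ : Fin 2 => K) 0)
    (hC : C = (LinearMap.proj 0 : (Fin 2 → K) →ₗ[K] K) + LinearMap.proj 1) :
    ∀ (Ua Wa Ub Wb Ud Wd : Submodule K K) (Uc Wc : Submodule K (Fin 2 → K)),
      IsCompl Ua Wa → IsCompl Ub Wb → IsCompl Uc Wc → IsCompl Ud Wd →
      Ua.map A ≤ Uc → Wa.map A ≤ Wc →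
      Ub.map B ≤ Uc → Wb.map B ≤ Wc →
      Uc.map C ≤ Ud → Wc.map C ≤ Wd →
      (Ua = ⊥ ∧ Ub = ⊥ ∧ Uc = ⊥ ∧ Ud = ⊥) ∨
      (Wa = ⊥ ∧ Wb = ⊥ ∧ Wc = ⊥ ∧ Wd = ⊥) := by
  subst hA hB hC
  intro Ua Wa Ub Wb Ud Wd Uc Wc ha hb hc hd hUA hWA hUB hWB hUC hWC
  have bot_of (p q : Submodule K K) (h : IsCompl p q) (hp : p = ⊤) : q = ⊥ := by
    have := h.inf_eq_bot
    rw [hp, top_inf_eq] at this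
    exact this
  have top_of (p q : Submodule K K) (h : IsCompl p q) (hp : p = ⊥) : q = ⊤ := by
    have := h.sup_eq_top
    rwa [hp, bot_sup_eq] at this
  rcases (eq_bot_or_eq_top Ua) with hUa | hUa <;>
    rcases (eq_bot_or_eq_top Ub) with hUb | hUb
  · -- Ua = ⊥, Ub = ⊥ : left disjunct
    left
    have hWa : Wa = ⊤ := top_of Ua Wa ha hUa
    have hWb : Wb = ⊤ := top_of Ub Wb hb hUb
    have h1 : Pi.single (1:Fin 2) (1:K) ∈ Wc := aux_single_mem Wa Wc 1 hWa hWA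
    have h0 : Pi.single (0:Fin 2) (1:K) ∈ Wc := aux_single_mem Wb Wc 0 hWb hWB
    have hWc : Wc = ⊤ := aux_c_top Wc h0 h1
    have hUc : Uc = ⊥ := aux_bot Uc Wc hc hWc
    have hWd : Wd = ⊤ := aux_top_of_one_mem Wd (aux_one_mem Wc Wd 0 h0 hWC)
    have hUd : Ud = ⊥ := aux_bot Ud Wd hd hWd
    exact ⟨hUa, hUb, hUc, hUd⟩
  · -- Ua = ⊥ (Wa = ⊤), Ub = ⊤ : contradiction
    exfalso
    have hWa : Wa = ⊤ := top_of Ua Wa ha hUa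
    have h1 : Pi.single (1:Fin 2) (1:K) ∈ Wc := aux_single_mem Wa Wc 1 hWa hWA
    have h0 : Pi.single (0:Fin 2) (1:K) ∈ Uc := aux_single_mem Ub Uc 0 hUb hUB
    have m1 : (1:K) ∈ Wd := aux_one_mem Wc Wd 1 h1 hWC
    have m0 : (1:K) ∈ Ud := aux_one_mem Uc Ud 0 h0 hUC
    have : (1:K) ∈ Ud ⊓ Wd := ⟨m0, m1⟩
    rw [hd.inf_eq_bot, Submodule.mem_bot] at this
    exact one_ne_zero this
  · -- Ua = ⊤, Ub = ⊥ : contradiction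
    exfalso
    have hWb : Wb = ⊤ := top_of Ub Wb hb hUb
    have h1 : Pi.single (1:Fin 2) (1:K) ∈ Uc := aux_single_mem Ua Uc 1 hUa hUA
    have h0 : Pi.single (0:Fin 2) (1:K) ∈ Wc := aux_single_mem Wb Wc 0 hWb hWB
    have m1 : (1:K) ∈ Ud := aux_one_mem Uc Ud 1 h1 hUC
    have m0 : (1:K) ∈ Wd := aux_one_mem Wc Wd 0 h0 hWC
    have : (1:K) ∈ Ud ⊓ Wd := ⟨m1, m0⟩
    rw [hd.inf_eq_bot, Submodule.mem_bot] at this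
    exact one_ne_zero this
  · -- Ua = ⊤, Ub = ⊤ : right disjunct
    right
    have hWa : Wa = ⊥ := aux_bot Wa Ua ha.symm hUa
    have hWb : Wb = ⊥ := aux_bot Wb Ub hb.symm hUb
    have h1 : Pi.single (1:Fin 2) (1:K) ∈ Uc := aux_single_mem Ua Uc 1 hUa hUA
    have h0 : Pi.single (0:Fin 2) (1:K) ∈ Uc := aux_single_mem Ub Uc 0 hUb hUB
    have hUc : Uc = ⊤ := aux_c_top Uc h0 h1
    have hWc : Wc = ⊥ := aux_bot Wc Uc hc.symm hUc
    have hUd : Ud = ⊤ := aux_top_of_one_mem Ud (aux_one_mem Uc Ud 0 h0 hUC)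
    have hWd : Wd = ⊥ := aux_bot Wd Ud hd.symm hUd
    exact ⟨hWa, hWb, hWc, hWd⟩
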